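/- Every chain of length t > 3 in a graph contains a chain of length t−1 that induces a prime subgraph. -/

import Mathlib

variable {V : Type*}

def GraphModule (G : SimpleGraph V) (X : Set V) : Prop :=
  ∀ v ∉ X, (∀ x ∈ X, G.Adj v x) ∨ (∀ x ∈ X, ¬ G.Adj v x)

def IsPrimeGraph (G : SimpleGraph V) : Prop :=
  ∀ X : Set V, GraphModule G X → X.Subsingleton ∨ X = Set.univ

structure GraphChain (G : SimpleGraph V) (I : Set V) (w : V) (m : ℕ)
    (v : Fin (m + 1) → V) : Prop where
  two_le : 2 ≤ m
  inj : Function.Injective v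
  mem0 : v 0 ∈ I
  mem1 : v 1 ∈ I
  not_mem : ∀ i : Fin (m + 1), 2 ≤ (i : ℕ) → v i ∉ I
  last_eq : v (Fin.last m) = w
  uniq : ∀ i : Fin (m + 1), 0 < (i : ℕ) →
    (∀ j : Fin (m + 1), (j : ℕ) < (i : ℕ) → (G.Adj (v i) (v j) ↔ (j : ℕ) + 1 = (i : ℕ))) ∨
    (∀ j : Fin (m + 1), (j : ℕ) < (i : ℕ) → (¬ G.Adj (v i) (v j) ↔ (j : ℕ) + 1 = (i : ℕ)))

def HasChain (G : SimpleGraph V) (I : Set V) (w : V) : Prop :=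
  ∃ m v, GraphChain G I w m v


lemma chain_adj {m : ℕ} {G : SimpleGraph V} {I : Set V} {w : V} {u : Fin (m + 1) → V}
    (hc : GraphChain G I w m u) (i j : ℕ) (h0 : 0 < i) (hi : i ≤ m) (hj : j < i) :
    G.Adj (u ⟨i, by omega⟩) (u ⟨j, by omega⟩) ↔
      (G.Adj (u ⟨i, by omega⟩) (u ⟨i - 1, by omega⟩) ↔ j + 1 = i) := by
  rcases hc.uniq ⟨i, by omega⟩ (by simpa using h0) with h | h
  · have h1 : G.Adj (u ⟨i, by omega⟩) (u ⟨i - 1, by omega⟩) :=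
      (h ⟨i - 1, by omega⟩ (by simp; omega)).mpr (by simp; omega)
    have h2 := h ⟨j, by omega⟩ (by simpa using hj)
    simp only [] at h2
    rw [h2]
    simp [h1]
  · have h1 : ¬ G.Adj (u ⟨i, by omega⟩) (u ⟨i - 1, by omega⟩) :=
      fun hA => by have := (h ⟨i - 1, by omega⟩ (by simp; omega)).mpr (by simp; omega); exact this hA
    have h2 := h ⟨j, by omega⟩ (by simpa using hj)
    simp at h2
    constructor
    · intro hA
      constructor
      · intro hA'; exact absurd hA' h1
      · intro hje; exact absurd hA (h2.mpr hje)
    · intro hIff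
      by_contra hA
      have := h2.mp hA
      exact h1 (hIff.mpr this)

lemma chain_firstlast {m : ℕ} {G : SimpleGraph V} {I : Set V} {w : V} {u : Fin (m + 1) → V}
    (hc : GraphChain G I w m u) (hm : 3 ≤ m)
    (hnp : ¬ IsPrimeGraph (G.induce (Set.range u))) :
    (G.Adj (u ⟨1, by omega⟩) (u ⟨0, by omega⟩) ↔
      ¬ G.Adj (u ⟨m, by omega⟩) (u ⟨m - 1, by omega⟩)) := by
  classical
  rw [IsPrimeGraph] at hnp
  push_neg at hnp
  obtain ⟨X, hXmod, hXns, hXuniv⟩ := hnp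
  set T : Set ℕ :=
    {n | ∃ hn : n < m + 1, (⟨u ⟨n, hn⟩, Set.mem_range_self _⟩ : ↥(Set.range u)) ∈ X} with hTdef
  have hTbound : ∀ n ∈ T, n < m + 1 := fun n hn => hn.1
  -- uniformity over pairs in T
  have hpair : ∀ k (hk : k < m + 1), k ∉ T → ∀ i j (hi : i < m + 1) (hj : j < m + 1),
      i ∈ T → j ∈ T →
      (G.Adj (u ⟨k, hk⟩) (u ⟨i, hi⟩) ↔ G.Adj (u ⟨k, hk⟩) (u ⟨j, hj⟩)) := by
    intro k hk hkT i j hi hj hiT hjT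
    have hkX : (⟨u ⟨k, hk⟩, Set.mem_range_self _⟩ : ↥(Set.range u)) ∉ X := fun h => hkT ⟨hk, h⟩
    obtain ⟨hi', hiX⟩ := hiT
    obtain ⟨hj', hjX⟩ := hjT
    rcases hXmod _ hkX with h | h
    · have h1 := h _ hiX
      have h2 := h _ hjX
      simp only [SimpleGraph.comap_adj, Function.Embedding.coe_subtype] at h1 h2
      exact iff_of_true h1 h2
    · have h1 := h _ hiX
      have h2 := h _ hjX
      simp only [SimpleGraph.comap_adj, Function.Embedding.coe_subtype] at h1 h2
      exact iff_of_false h1 h2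
  -- two distinct elements of T
  have hT2 : ∃ p q, p ∈ T ∧ q ∈ T ∧ p ≠ q := by
    obtain ⟨x, hx, y, hy, hxy⟩ := hXns
    obtain ⟨⟨ix, hix⟩, hux⟩ := x.2
    obtain ⟨⟨iy, hiy⟩, huy⟩ := y.2
    refine ⟨ix, iy, ⟨hix, ?_⟩, ⟨hiy, ?_⟩, ?_⟩
    · have : (⟨u ⟨ix, hix⟩, Set.mem_range_self _⟩ : ↥(Set.range u)) = x := Subtype.ext hux
      rw [this]; exact hx
    · have : (⟨u ⟨iy, hiy⟩, Set.mem_range_self _⟩ : ↥(Set.range u)) = y := Subtype.ext huy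
      rw [this]; exact hy
    · intro hE
      apply hxy
      apply Subtype.ext
      rw [← hux, ← huy]
      exact congrArg u (Fin.ext hE)
  -- an element outside T
  have hout : ∃ k, k < m + 1 ∧ k ∉ T := by
    obtain ⟨x, hx⟩ := (Set.ne_univ_iff_exists_notMem _).mp hXuniv
    obtain ⟨⟨ix, hix⟩, hux⟩ := x.2
    refine ⟨ix, hix, fun hT => hx ?_⟩
    obtain ⟨hn, hmem⟩ := hT
    have : (⟨u ⟨ix, hn⟩, Set.mem_range_self _⟩ : ↥(Set.range u)) = x := Subtype.ext hux
    rw [← this]; exact hmem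
  -- closure upward
  have hclose : ∀ a b, a ∈ T → b ∈ T → a < b → ∀ c, b ≤ c → c < m + 1 → c ∈ T := by
    intro a b haT hbT hab c hbc
    induction c, hbc using Nat.le_induction with
    | base => intro _; exact hbT
    | succ c hbc ih =>
      intro hcm
      by_contra hc1T
      have hcT : c ∈ T := ih (by omega)
      have H := hpair (c + 1) hcm hc1T a c (by omega) (by omega) haT hcT
      have h1 := chain_adj hc (c + 1) a (by omega) (by omega) (by omega)
      have h2 := chain_adj hc (c + 1) c (by omega) (by omega) (by omega)
      by_cases hδ : G.Adj (u ⟨c + 1, (by omega : c + 1 < m + 1)⟩) (u ⟨c + 1 - 1, by omega⟩)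
      · have hAc : G.Adj (u ⟨c + 1, (by omega : c + 1 < m + 1)⟩) (u ⟨c, by omega⟩) :=
          h2.mpr (iff_of_true hδ rfl)
        have hAa := H.mpr hAc
        have : a + 1 = c + 1 := (h1.mp hAa).mp hδ
        omega
      · have hAa : G.Adj (u ⟨c + 1, (by omega : c + 1 < m + 1)⟩) (u ⟨a, by omega⟩) :=
          h1.mpr (iff_of_false hδ (by omega))
        have hAc := H.mp hAa
        exact hδ ((h2.mp hAc).mpr rfl)
  obtain ⟨p, q, hpT, hqT, hpq⟩ := hT2
  -- m ∈ T
  have hmT : (m : ℕ) ∈ T := by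
    rcases Nat.lt_or_ge p q with h | h
    · exact hclose p q hpT hqT h m (by have := hTbound q hqT; omega) (by omega)
    · have h' : q < p := by omega
      exact hclose q p hqT hpT h' m (by have := hTbound p hpT; omega) (by omega)
  -- least element
  have hdec : DecidablePred (· ∈ T) := fun _ => Classical.dec _
  have hTne : ∃ n, n ∈ T := ⟨p, hpT⟩
  set a := Nat.find hTne with hadef
  have haT : a ∈ T := Nat.find_spec hTne
  have hmin : ∀ k, k < a → k ∉ T := fun k hk => Nat.find_min hTne hk
  have hsec : ∃ b, b ∈ T ∧ a < b := by
    have hp' : a ≤ p := Nat.find_min' hTne hpT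
    have hq' : a ≤ q := Nat.find_min' hTne hqT
    rcases Nat.lt_or_ge a p with h | h
    · exact ⟨p, hpT, h⟩
    · have hpa : p = a := by omega
      exact ⟨q, hqT, by omega⟩
  obtain ⟨b, hbT, hab⟩ := hsec
  have hbm : b < m + 1 := hTbound b hbT
  have ham : a < m + 1 := hTbound a haT
  have hamlt : a < m := by omega
  -- a ≤ 1
  have ha1 : a ≤ 1 := by
    by_contra h2a
    push_neg at h2a
    have hk1 : (a - 1) ∉ T := hmin _ (by omega)
    have hk2 : (a - 2) ∉ T := hmin _ (by omega)
    have H1 := hpair (a - 1) (by omega) hk1 a m (by omega) (by omega) haT hmT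
    have H2 := hpair (a - 2) (by omega) hk2 a m (by omega) (by omega) haT hmT
    have cm1 := chain_adj hc m (a - 1) (by omega) (by omega) (by omega)
    have cm2 := chain_adj hc m (a - 2) (by omega) (by omega) (by omega)
    have ca2 := chain_adj hc a (a - 2) (by omega) (by omega) (by omega)
    by_cases hPm : G.Adj (u ⟨m, (by omega : m < m + 1)⟩) (u ⟨m - 1, by omega⟩)
    · have c1 : ¬ G.Adj (u ⟨m, (by omega : m < m + 1)⟩) (u ⟨a - 1, by omega⟩) := by
        intro h
        have := (cm1.mp h).mp hPm
        omega
      have c2 : ¬ G.Adj (u ⟨m, (by omega : m < m + 1)⟩) (u ⟨a - 2, by omega⟩) := by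
        intro h
        have := (cm2.mp h).mp hPm
        omega
      have hna : ¬ G.Adj (u ⟨a - 1, (by omega : a - 1 < m + 1)⟩) (u ⟨a, by omega⟩) := by
        intro h
        exact c1 ((G.adj_comm _ _).mp (H1.mp h))
      have hδa : ¬ G.Adj (u ⟨a, (by omega : a < m + 1)⟩) (u ⟨a - 1, by omega⟩) :=
        fun h => hna ((G.adj_comm _ _).mp h)
      have hAa2 : G.Adj (u ⟨a, (by omega : a < m + 1)⟩) (u ⟨a - 2, by omega⟩) := by
        apply ca2.mpr
        constructor
        · intro h; exact absurd h (by exact fun hh => hδa (by exact h))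
        · intro h; omega
      exact c2 ((G.adj_comm _ _).mp (H2.mp ((G.adj_comm _ _).mp hAa2)))
    · have c1 : G.Adj (u ⟨m, (by omega : m < m + 1)⟩) (u ⟨a - 1, by omega⟩) := by
        apply cm1.mpr
        exact iff_of_false hPm (by omega)
      have c2 : G.Adj (u ⟨m, (by omega : m < m + 1)⟩) (u ⟨a - 2, by omega⟩) := by
        apply cm2.mpr
        exact iff_of_false hPm (by omega)
      have hδa : G.Adj (u ⟨a, (by omega : a < m + 1)⟩) (u ⟨a - 1, by omega⟩) := by
        have := H1.mpr ((G.adj_comm _ _).mp c1)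
        exact (G.adj_comm _ _).mp this
      have hAa2 : G.Adj (u ⟨a, (by omega : a < m + 1)⟩) (u ⟨a - 2, by omega⟩) := by
        have := H2.mpr ((G.adj_comm _ _).mp c2)
        exact (G.adj_comm _ _).mp this
      have := (ca2.mp hAa2).mp hδa
      omega
  -- conclude
  have cm1 := chain_adj hc m 1 (by omega) (by omega) (by omega)
  have cm0 := chain_adj hc m 0 (by omega) (by omega) (by omega)
  have ha01 : a = 0 ∨ a = 1 := by omega
  rcases ha01 with hA | hA
  · rw [hA] at haT
    have h1T : (1 : ℕ) ∉ T := by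
      intro h1T
      obtain ⟨k0, hk0m, hk0T⟩ := hout
      apply hk0T
      rcases Nat.eq_zero_or_pos k0 with h | h
      · rw [h]; exact haT
      · exact hclose 0 1 haT h1T (by omega) k0 (by omega) hk0m
    have H := hpair 1 (by omega) h1T 0 m (by omega) (by omega) haT hmT
    constructor
    · intro h
      intro hPm
      have := (cm1.mp ((G.adj_comm _ _).mp (H.mp h))).mp hPm
      omega
    · intro hPm
      apply H.mpr
      apply (G.adj_comm _ _).mpr
      apply cm1.mpr
      exact iff_of_false hPm (by omega)
  · rw [hA] at haT
    have h0T : (0 : ℕ) ∉ T := hmin 0 (by omega)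
    have H := hpair 0 (by omega) h0T 1 m (by omega) (by omega) haT hmT
    constructor
    · intro h
      intro hPm
      have := (cm0.mp ((G.adj_comm _ _).mp (H.mp ((G.adj_comm _ _).mp h)))).mp hPm
      omega
    · intro hPm
      apply (G.adj_comm _ _).mpr
      apply H.mpr
      apply (G.adj_comm _ _).mpr
      apply cm0.mpr
      exact iff_of_false hPm (by omega)

theorem statement10 (G : SimpleGraph V) (t : ℕ) (ht : 3 < t) (I : Set V) (w : V)
    (v : Fin (t + 1) → V) (hc : GraphChain G I w t v) :
    ∃ v' : Fin (t - 1 + 1) → V,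
      GraphChain G {v' 0, v' 1} (v' (Fin.last (t - 1))) (t - 1) v' ∧
      Set.range v' ⊆ Set.range v ∧
      IsPrimeGraph (G.induce (Set.range v')) := by
  classical
  have hv1 : ((1 : Fin (t - 1 + 1)) : ℕ) = 1 := by
    have : 3 ≤ t - 1 := by omega
    rw [Fin.val_one', Nat.one_mod_eq_one]
    omega
  set u0 : Fin (t - 1 + 1) → V := fun k => v ⟨(k : ℕ) + 1, by have := k.isLt; omega⟩ with hu0
  set u1 : Fin (t - 1 + 1) → V := fun k =>
    if (k : ℕ) = 0 then v ⟨0, by omega⟩ else v ⟨(k : ℕ) + 1, by have := k.isLt; omega⟩ with hu1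
  have hu1z : ∀ k : Fin (t - 1 + 1), (k : ℕ) = 0 → u1 k = v ⟨0, by omega⟩ := by
    intro k hk; simp only [hu1]; rw [if_pos hk]
  have hu1s : ∀ k : Fin (t - 1 + 1), (k : ℕ) ≠ 0 →
      u1 k = v ⟨(k : ℕ) + 1, by have := k.isLt; omega⟩ := by
    intro k hk; simp only [hu1]; rw [if_neg hk]
  -- injectivity
  have hinj0 : Function.Injective u0 := by
    intro x y h
    have h2 : ((⟨(x : ℕ) + 1, by have := x.isLt; omega⟩ : Fin (t + 1)) : ℕ)
        = ((⟨(y : ℕ) + 1, by have := y.isLt; omega⟩ : Fin (t + 1)) : ℕ) :=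
      congrArg Fin.val (hc.inj h)
    simp at h2
    exact Fin.ext h2
  have hinj1 : Function.Injective u1 := by
    intro x y h
    by_cases hx : (x : ℕ) = 0 <;> by_cases hy : (y : ℕ) = 0
    · exact Fin.ext (by omega)
    · rw [hu1z x hx, hu1s y hy] at h
      have h2 := congrArg Fin.val (hc.inj h)
      simp at h2
    · rw [hu1s x hx, hu1z y hy] at h
      have h2 := congrArg Fin.val (hc.inj h)
      simp at h2
    · rw [hu1s x hx, hu1s y hy] at h
      have h2 := congrArg Fin.val (hc.inj h)
      simp at h2
      exact Fin.ext (by omega)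
  -- chain structure for u0
  have hch0 : GraphChain G {u0 0, u0 1} (u0 (Fin.last (t - 1))) (t - 1) u0 := by
    refine ⟨by omega, hinj0, Set.mem_insert _ _, Set.mem_insert_of_mem _ rfl, ?_, rfl, ?_⟩
    · intro i hi hmem
      rcases hmem with h | h
      · have := hinj0 h; rw [this] at hi; simp at hi
      · have := hinj0 h; rw [this] at hi; rw [hv1] at hi; omega
    · intro i hi
      rcases hc.uniq ⟨(i : ℕ) + 1, by have := i.isLt; omega⟩ (by simp) with h | h
      · left
        intro j hj
        have hh := h ⟨(j : ℕ) + 1, by have := j.isLt; omega⟩ (by simp; omega)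
        exact hh.trans (show ((j : ℕ) + 1 + 1 = (i : ℕ) + 1) ↔ ((j : ℕ) + 1 = (i : ℕ)) from by omega)
      · right
        intro j hj
        have hh := h ⟨(j : ℕ) + 1, by have := j.isLt; omega⟩ (by simp; omega)
        exact hh.trans (show ((j : ℕ) + 1 + 1 = (i : ℕ) + 1) ↔ ((j : ℕ) + 1 = (i : ℕ)) from by omega)
  -- chain structure for u1
  have hch1 : GraphChain G {u1 0, u1 1} (u1 (Fin.last (t - 1))) (t - 1) u1 := by
    refine ⟨by omega, hinj1, Set.mem_insert _ _, Set.mem_insert_of_mem _ rfl, ?_, rfl, ?_⟩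
    · intro i hi hmem
      rcases hmem with h | h
      · have := hinj1 h; rw [this] at hi; simp at hi
      · have := hinj1 h; rw [this] at hi; rw [hv1] at hi; omega
    · intro i hi
      rcases Nat.lt_or_ge 1 (i : ℕ) with h1i | h1i
      · -- i ≥ 2
        rcases hc.uniq ⟨(i : ℕ) + 1, by have := i.isLt; omega⟩ (by simp) with h | h
        · left
          intro j hj
          by_cases hj0 : (j : ℕ) = 0
          · have hh := h ⟨0, by omega⟩ (by simp)
            rw [hu1z j hj0, hu1s i (by omega)]
            exact hh.trans (show ((0 : ℕ) + 1 = (i : ℕ) + 1) ↔ ((j : ℕ) + 1 = (i : ℕ)) from by omega)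
          · have hh := h ⟨(j : ℕ) + 1, by have := j.isLt; omega⟩ (by simp; omega)
            rw [hu1s j hj0, hu1s i (by omega)]
            exact hh.trans (show ((j : ℕ) + 1 + 1 = (i : ℕ) + 1) ↔ ((j : ℕ) + 1 = (i : ℕ)) from by omega)
        · right
          intro j hj
          by_cases hj0 : (j : ℕ) = 0
          · have hh := h ⟨0, by omega⟩ (by simp)
            rw [hu1z j hj0, hu1s i (by omega)]
            exact hh.trans (show ((0 : ℕ) + 1 = (i : ℕ) + 1) ↔ ((j : ℕ) + 1 = (i : ℕ)) from by omega)
          · have hh := h ⟨(j : ℕ) + 1, by have := j.isLt; omega⟩ (by simp; omega)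
            rw [hu1s j hj0, hu1s i (by omega)]
            exact hh.trans (show ((j : ℕ) + 1 + 1 = (i : ℕ) + 1) ↔ ((j : ℕ) + 1 = (i : ℕ)) from by omega)
      · -- i = 1
        by_cases hA : G.Adj (u1 i) (u1 ⟨0, by omega⟩)
        · left
          intro j hj
          rw [show j = (⟨0, by omega⟩ : Fin (t - 1 + 1)) from Fin.ext (by show (j : ℕ) = 0; omega)]
          exact iff_of_true hA (show (0 : ℕ) + 1 = (i : ℕ) from by omega)
        · right
          intro j hj
          rw [show j = (⟨0, by omega⟩ : Fin (t - 1 + 1)) from Fin.ext (by show (j : ℕ) = 0; omega)]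
          exact iff_of_true hA (show (0 : ℕ) + 1 = (i : ℕ) from by omega)
  -- range subsets
  have hsub0 : Set.range u0 ⊆ Set.range v := by
    rintro x ⟨k, rfl⟩
    exact ⟨⟨(k : ℕ) + 1, by have := k.isLt; omega⟩, rfl⟩
  have hsub1 : Set.range u1 ⊆ Set.range v := by
    rintro x ⟨k, rfl⟩
    by_cases hk : (k : ℕ) = 0
    · exact ⟨⟨0, by omega⟩, (hu1z k hk).symm⟩
    · exact ⟨⟨(k : ℕ) + 1, by have := k.isLt; omega⟩, (hu1s k hk).symm⟩
  by_cases hp0 : IsPrimeGraph (G.induce (Set.range u0))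
  · exact ⟨u0, hch0, hsub0, hp0⟩
  by_cases hp1 : IsPrimeGraph (G.induce (Set.range u1))
  · exact ⟨u1, hch1, hsub1, hp1⟩
  exfalso
  have h0 := chain_firstlast hch0 (by omega) hp0
  have h1 := chain_firstlast hch1 (by omega) hp1
  -- rewrite in terms of v
  have e1 : u1 ⟨1, by omega⟩ = v ⟨2, by omega⟩ := by
    rw [hu1s ⟨1, by omega⟩ (by simp)]
  have e0 : u1 ⟨0, by omega⟩ = v ⟨0, by omega⟩ := hu1z _ rfl
  have e3 : u1 ⟨t - 1, by omega⟩ = v ⟨t - 1 + 1, by omega⟩ := by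
    rw [hu1s ⟨t - 1, by omega⟩ (by simp; omega)]
  have e4 : u1 ⟨t - 1 - 1, by omega⟩ = v ⟨t - 1 - 1 + 1, by omega⟩ := by
    rw [hu1s ⟨t - 1 - 1, by omega⟩ (by simp; omega)]
  rw [e1, e0, e3, e4] at h1
  -- h0 is already defeq to the v-form
  have h0' : G.Adj (v ⟨2, by omega⟩) (v ⟨1, by omega⟩) ↔
      ¬ G.Adj (v ⟨t - 1 + 1, by omega⟩) (v ⟨t - 1 - 1 + 1, by omega⟩) := h0
  have c20 := chain_adj hc 2 0 (by omega) (by omega) (by omega)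
  by_cases hD : G.Adj (v ⟨t - 1 + 1, (by omega : t - 1 + 1 < t + 1)⟩)
      (v ⟨t - 1 - 1 + 1, by omega⟩)
  · have hn1 : ¬ G.Adj (v ⟨2, (by omega : 2 < t + 1)⟩) (v ⟨1, by omega⟩) :=
      fun h => (h0'.mp h) hD
    have hn0 : ¬ G.Adj (v ⟨2, (by omega : 2 < t + 1)⟩) (v ⟨0, by omega⟩) :=
      fun h => (h1.mp h) hD
    exact hn0 (c20.mpr (iff_of_false hn1 (by omega)))
  · have hA1 : G.Adj (v ⟨2, (by omega : 2 < t + 1)⟩) (v ⟨1, by omega⟩) := h0'.mpr hD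
    have hA0 : G.Adj (v ⟨2, (by omega : 2 < t + 1)⟩) (v ⟨0, by omega⟩) := h1.mpr hD
    have := (c20.mp hA0).mp hA1
    omega
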